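/- A deterministic filter F is neighborhood comparable (NC) if and only if its compatibility relation ∼ is transitive (and hence, being reflexive and symmetric, an equivalence relation on the states of F). -/

import Mathlib

/-- A clique cover of a simple graph: a finite family of cliques covering every vertex. -/
def SimpleGraph.IsCliqueCover {V : Type} (G : SimpleGraph V) (K : Finset (Finset V)) : Prop :=
  (∀ s ∈ K, G.IsClique (s : Set V)) ∧ ∀ v : V, ∃ s ∈ K, v ∈ s

/-- The clique cover number: minimum number of cliques in a clique cover. -/
noncomputable def SimpleGraph.cliqueCoverNum {V : Type} (G : SimpleGraph V) : ℕ :=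
  sInf {n | ∃ K : Finset (Finset V), G.IsCliqueCover K ∧ K.card = n}

/-- The closed neighborhood of a vertex. -/
def SimpleGraph.closedNbhd {V : Type} (G : SimpleGraph V) (v : V) : Set V :=
  {w | w = v ∨ G.Adj v w}

/-- A graph is chordal if every cycle of length at least four has a chord:
an edge of the graph joining two vertices of the cycle that is not an edge of the cycle. -/
def SimpleGraph.Chordal {V : Type} (G : SimpleGraph V) : Prop :=
  ∀ (v : V) (c : G.Walk v v), c.IsCycle → 4 ≤ c.length →
    ∃ x y : V, G.Adj x y ∧ x ∈ c.support ∧ y ∈ c.support ∧ s(x, y) ∉ c.edges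

/-- A deterministic (combinatorial) filter: states `S`, observations `Y`, outputs `C`,
an initial state, a partial transition function and an output function. -/
structure DFilter (S Y C : Type) where
  init : S
  tr : S → Y → Option S
  out : S → C

namespace DFilter

variable {S Y C : Type}

/-- Trace an observation sequence from a state (`none` if it crashes). -/
def run (F : DFilter S Y C) : S → List Y → Option S
  | v, [] => some v
  | v, y :: ys => (F.tr v y).bind fun w => F.run w ys

/-- The extensions of a state: observation sequences traceable from it. -/
def Ext (F : DFilter S Y C) (v : S) : Set (List Y) :=
  {s | (F.run v s).isSome}

/-- The output sequence produced by tracing an observation sequence from a state,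
reading the output at every visited state (starting with the output of the state itself). -/
def outs (F : DFilter S Y C) : S → List Y → Option (List C)
  | v, [] => some [F.out v]
  | v, y :: ys => (F.tr v y).bind fun w => (F.outs w ys).map (F.out v :: ·)

/-- Two states are compatible when the outputs they produce agree on all common extensions. -/
def Compatible (F : DFilter S Y C) (v w : S) : Prop :=
  ∀ s : List Y, s ∈ F.Ext v → s ∈ F.Ext w → F.outs v s = F.outs w s

/-- The compatibility graph: edges join distinct compatible states. -/
def compatGraph (F : DFilter S Y C) : SimpleGraph S where
  Adj v w := v ≠ w ∧ F.Compatible v w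
  symm := by
    constructor
    rintro v w ⟨hne, hc⟩
    exact ⟨hne.symm, fun s hw hv => (hc s hv hw).symm⟩
  loopless := ⟨fun v h => h.1 rfl⟩

/-- A filter is globally language comparable (GLC) when the extension sets of any two
compatible states are comparable under inclusion. -/
def GLC (F : DFilter S Y C) : Prop :=
  ∀ v w : S, F.Compatible v w → F.Ext v ⊆ F.Ext w ∨ F.Ext w ⊆ F.Ext v

/-- A filter is neighborhood comparable (NC) when any two vertices of its compatibility
graph with intersecting closed neighborhoods have comparable closed neighborhoods. -/
def NC (F : DFilter S Y C) : Prop :=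
  ∀ v w : S, (F.compatGraph.closedNbhd v ∩ F.compatGraph.closedNbhd w).Nonempty →
    F.compatGraph.closedNbhd v ⊆ F.compatGraph.closedNbhd w ∨
      F.compatGraph.closedNbhd w ⊆ F.compatGraph.closedNbhd v

/-- The target set of the determinism-enforcing zipper constraint generated by a
set of states `U` and an observation `y`: all `y`-children of members of `U`. -/
def zipTarget (F : DFilter S Y C) (U : Set S) (y : Y) : Set S :=
  {w | ∃ u ∈ U, F.tr u y = some w}

/-- A set of mutually compatible states. -/
def MutuallyCompatible (F : DFilter S Y C) (U : Set S) : Prop :=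
  ∀ u ∈ U, ∀ u' ∈ U, F.Compatible u u'

end DFilter

lemma compat_refl {S Y C : Type} (F : DFilter S Y C) (v : S) : F.Compatible v v :=
  fun _ _ _ => rfl

lemma compat_symm {S Y C : Type} (F : DFilter S Y C) {v w : S} (h : F.Compatible v w) :
    F.Compatible w v := fun s hw hv => (h s hv hw).symm

lemma mem_closedNbhd {S Y C : Type} (F : DFilter S Y C) (v w : S) :
    w ∈ F.compatGraph.closedNbhd v ↔ F.Compatible v w := by
  constructor
  · rintro (rfl | ⟨_, h⟩)
    · exact compat_refl F w
    · exact h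
  · intro h
    by_cases hvw : w = v
    · exact Or.inl hvw
    · exact Or.inr ⟨fun e => hvw e.symm, h⟩

/-- A filter is neighborhood comparable if and only if its compatibility relation is
transitive; and being reflexive and symmetric, a transitive compatibility relation is an
equivalence relation. -/
theorem nc_iff_compatible_transitive {S Y C : Type} (F : DFilter S Y C) :
    (F.NC ↔ Transitive F.Compatible) ∧
    (Transitive F.Compatible → Equivalence F.Compatible) := by
  constructor
  · constructor
    · intro hnc a b c hab hbc
      have hb : b ∈ F.compatGraph.closedNbhd a ∩ F.compatGraph.closedNbhd c :=
        ⟨(mem_closedNbhd F a b).2 hab, (mem_closedNbhd F c b).2 (compat_symm F hbc)⟩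
      rcases hnc a c ⟨b, hb⟩ with h | h
      · exact compat_symm F ((mem_closedNbhd F c a).1
          (h ((mem_closedNbhd F a a).2 (compat_refl F a))))
      · exact (mem_closedNbhd F a c).1 (h ((mem_closedNbhd F c c).2 (compat_refl F c)))
    · intro htr v w ⟨u, hu1, hu2⟩
      have hvw : F.Compatible v w :=
        htr ((mem_closedNbhd F v u).1 hu1) (compat_symm F ((mem_closedNbhd F w u).1 hu2))
      left
      intro x hx
      exact (mem_closedNbhd F w x).2 (htr (compat_symm F hvw) ((mem_closedNbhd F v x).1 hx))
  · intro htr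
    exact ⟨compat_refl F, fun h => compat_symm F h, fun h1 h2 => htr h1 h2⟩
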